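/- For t ≥ 2 and real numbers a, b, c, d with a' = max(a,c), b' = max(b,d), a'' = min(a,c), b'' = min(b,d), one has |a'−b'|^t + |a''−b''|^t ≤ |a−b|^t + |c−d|^t. -/

import Mathlib

open Set

lemma abs_image_univ : (fun x : ℝ => |x|) '' univ = Ici 0 := by
  ext x
  simp only [mem_image, mem_univ, true_and, mem_Ici]
  constructor
  · rintro ⟨y, rfl⟩; exact abs_nonneg y
  · intro hx; exact ⟨x, abs_of_nonneg hx⟩

lemma abs_rpow_convex {t : ℝ} (ht : 1 ≤ t) :
    ConvexOn ℝ univ (fun x : ℝ => |x| ^ t) := by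
  have hc : ConvexOn ℝ univ (fun x : ℝ => |x|) := by
    exact convexOn_norm (convex_univ (𝕜 := ℝ) (E := ℝ))
  have := (ConvexOn.comp (g := fun x : ℝ => x ^ t) (f := fun x : ℝ => |x|)
    (by rw [abs_image_univ]; exact convexOn_rpow ht) hc ?_)
  · exact this
  · rw [abs_image_univ]
    intro x hx y hy hxy
    exact Real.rpow_le_rpow hx hxy (le_trans zero_le_one ht)

/-- For a convex function, if y ≤ x' ≤ x then f x' + f (x + y - x') ≤ f x + f y. -/
lemma convex_rearrange {f : ℝ → ℝ} (hf : ConvexOn ℝ univ f) {x y x' : ℝ}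
    (h1 : y ≤ x') (h2 : x' ≤ x) : f x' + f (x + y - x') ≤ f x + f y := by
  rcases eq_or_lt_of_le (h1.trans h2) with h | h
  · have hx' : x' = x := le_antisymm h2 (h ▸ h1)
    have hy' : y = x := h ▸ rfl
    subst hx'; subst hy'; simp
  · set l1 := (x' - y) / (x - y) with hl
    have hxy : 0 < x - y := sub_pos.mpr h
    have hl0 : 0 ≤ l1 := div_nonneg (sub_nonneg.mpr h1) hxy.le
    have hl1 : l1 ≤ 1 := (div_le_one hxy).mpr (sub_le_sub_right h2 y)
    have key1 : x' = l1 * x + (1 - l1) * y := by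
      field_simp [hl]; linear_combination -(div_mul_cancel₀ (x' - y) hxy.ne') - (x - y) * hl
    have key2 : x + y - x' = (1 - l1) * x + l1 * y := by
      rw [key1]; ring
    have e1 := hf.2 (mem_univ x) (mem_univ y) hl0 (show (0:ℝ) ≤ 1 - l1 by linarith) (by ring)
    have e2 := hf.2 (mem_univ x) (mem_univ y) (show (0:ℝ) ≤ 1 - l1 by linarith) hl0 (by ring)
    rw [key2, key1]
    calc f (l1 • x + (1 - l1) • y) + f ((1 - l1) • x + l1 • y)
        ≤ (l1 * f x + (1 - l1) * f y) + ((1 - l1) * f x + l1 * f y) := add_le_add e1 e2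
      _ = f x + f y := by ring

/-- Scalar submodularity inequality for `(x,y) ↦ |x - y|^t`, `t ≥ 2`. -/
theorem stmt9 (t : ℝ) (ht : 2 ≤ t) (a b c d : ℝ) :
    |max a c - max b d| ^ t + |min a c - min b d| ^ t ≤
      |a - b| ^ t + |c - d| ^ t := by
  have ht1 : (1:ℝ) ≤ t := by linarith
  have hf := abs_rpow_convex ht1
  rcases le_total c a with hac | hac <;> rcases le_total d b with hdb | hdb
  · rw [max_eq_left hac, max_eq_left hdb, min_eq_right hac, min_eq_right hdb]
  · -- a ≥ c, b ≤ d : terms are |a-d|, |c-b|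
    rw [max_eq_left hac, max_eq_right hdb, min_eq_right hac, min_eq_left hdb]
    have h1 : c - d ≤ a - d := by linarith
    have h2 : a - d ≤ a - b := by linarith
    have := convex_rearrange hf h1 h2
    have heq : (a - b) + (c - d) - (a - d) = c - b := by ring
    rw [heq] at this
    linarith
  · rw [max_eq_right hac, max_eq_left hdb, min_eq_left hac, min_eq_right hdb]
    have h1 : a - b ≤ c - b := by linarith
    have h2 : c - b ≤ c - d := by linarith
    have := convex_rearrange hf h1 h2
    have heq : (c - d) + (a - b) - (c - b) = a - d := by ring
    rw [heq] at this
    linarith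
  · rw [max_eq_right hac, max_eq_right hdb, min_eq_left hac, min_eq_left hdb]
    rw [add_comm]
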